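/- Let Γ ⊂ ℝⁿ be an open, convex, symmetric cone with vertex at the origin satisfying Γₙ⁺ ⊆ Γ ⊆ Γ₁⁺ and Γ ≠ Γ₁⁺. For t ∈ [0,1) define λᵗ = tλ + (1−t)σ₁(λ)e where e = (1,…,1), and Γᵗ = {λ ∈ ℝⁿ : λᵗ ∈ Γ}. Then ∂Γᵗ ∩ Γ̄ = {0}, i.e. the only point lying both on the boundary of Γᵗ and in the closure of Γ is the origin. -/

import Mathlib

open Finset

/-- The `k`-th elementary symmetric polynomial of `x : Fin n → ℝ`. -/
noncomputable def esymm (n k : ℕ) (x : Fin n → ℝ) : ℝ :=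
  ∑ s ∈ Finset.powersetCard k (Finset.univ : Finset (Fin n)), ∏ i ∈ s, x i

/-- The Gårding cone `Γₖ⁺ = {λ : σⱼ(λ) > 0 for all 1 ≤ j ≤ k}`. -/
def GammaK (n k : ℕ) : Set (Fin n → ℝ) :=
  {x | ∀ j, 1 ≤ j → j ≤ k → 0 < esymm n j x}

/-- The transformation `λ ↦ λ^τ = τλ + (1-τ)σ₁(λ)e`. -/
def lamT (n : ℕ) (τ : ℝ) (x : Fin n → ℝ) : Fin n → ℝ :=
  fun i => τ * x i + (1 - τ) * ∑ j, x j

lemma esymm_one_eq (n : ℕ) (x : Fin n → ℝ) : esymm n 1 x = ∑ i, x i := by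
  rw [esymm, Finset.powersetCard_one, Finset.sum_map]
  simp

open Fin.NatCast

lemma finRotate_pow (m p : ℕ) (i : Fin (m + 1)) :
    ((finRotate (m + 1)) ^ p) i = i + (p : Fin (m + 1)) := by
  induction p generalizing i with
  | zero => simp
  | succ p ih =>
    rw [pow_succ, Equiv.Perm.mul_apply, finRotate_succ_apply, ih]
    push_cast
    abel

theorem stmt1 (n : ℕ) (hn : 3 ≤ n) (Γ : Set (Fin n → ℝ))
    (hopen : IsOpen Γ) (hconv : Convex ℝ Γ)
    (hsym : ∀ σ : Equiv.Perm (Fin n), ∀ x ∈ Γ, x ∘ σ ∈ Γ)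
    (hcone : ∀ s : ℝ, 0 < s → ∀ x ∈ Γ, s • x ∈ Γ)
    (hlow : GammaK n n ⊆ Γ) (hup : Γ ⊆ GammaK n 1) (hne : Γ ≠ GammaK n 1)
    (t : ℝ) (ht0 : 0 ≤ t) (ht1 : t < 1) :
    frontier {x | lamT n t x ∈ Γ} ∩ closure Γ = {0} := by
  set ee : Fin n → ℝ := fun _ => (1 : ℝ) with hee_def
  have hee_mem : ee ∈ Γ := by
    apply hlow
    intro j hj1 hjn
    have h1 : esymm n j ee = (n.choose j : ℝ) := by
      simp [esymm, hee_def, Finset.card_powersetCard]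
    rw [h1]
    exact_mod_cast Nat.choose_pos hjn
  have h0notΓ : (0 : Fin n → ℝ) ∉ Γ := by
    intro h
    have := hup h 1 le_rfl le_rfl
    rw [esymm_one_eq] at this
    simp at this
  have h0cl : (0 : Fin n → ℝ) ∈ closure Γ := by
    have htend : Filter.Tendsto (fun k : ℕ => (1 / ((k : ℝ) + 1)) • ee)
        Filter.atTop (nhds (0 : Fin n → ℝ)) := by
      have := (tendsto_one_div_add_atTop_nhds_zero_nat (𝕜 := ℝ)).smul_const ee
      rwa [zero_smul] at this
    exact mem_closure_of_tendsto htend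
      (Filter.Eventually.of_forall fun k => hcone _ (by positivity) _ hee_mem)
  have hcl_scale : ∀ s : ℝ, 0 < s → ∀ x ∈ closure Γ, s • x ∈ closure Γ := by
    intro s hs x hx
    exact map_mem_closure (continuous_const_smul s) hx (fun y hy => hcone s hs y hy)
  have hcl_scale0 : ∀ s : ℝ, 0 ≤ s → ∀ x ∈ closure Γ, s • x ∈ closure Γ := by
    intro s hs x hx
    rcases hs.eq_or_lt with rfl | hs'
    · rw [zero_smul]; exact h0cl
    · exact hcl_scale s hs' x hx
  have hcl_perm : ∀ σ : Equiv.Perm (Fin n), ∀ x ∈ closure Γ, x ∘ σ ∈ closure Γ := by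
    intro σ x hx
    have hcont : Continuous (fun y : Fin n → ℝ => y ∘ σ) :=
      continuous_pi fun i => continuous_apply (σ i)
    exact map_mem_closure (f := fun y : Fin n → ℝ => y ∘ σ) hcont hx
      (fun y hy => hsym σ y hy)
  have hadd : ∀ x ∈ closure Γ, ∀ y ∈ Γ, x + y ∈ Γ := by
    intro x hx y hy
    have h2 : (1/2 : ℝ) • y + (1/2 : ℝ) • x ∈ interior Γ :=
      hconv.combo_interior_closure_mem_interior (by rwa [hopen.interior_eq]) hx
        (by norm_num) (by norm_num) (by norm_num)
    rw [hopen.interior_eq] at h2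
    have h3 := hcone 2 (by norm_num) _ h2
    have h4 : (2 : ℝ) • ((1/2 : ℝ) • y + (1/2 : ℝ) • x) = x + y := by
      module
    rwa [h4] at h3
  have hcladd : ∀ x ∈ closure Γ, ∀ y ∈ closure Γ, x + y ∈ closure Γ := by
    intro x hx y hy
    have h2 : (1/2 : ℝ) • x + (1/2 : ℝ) • y ∈ closure Γ :=
      hconv.closure hx hy (by norm_num) (by norm_num) (by norm_num)
    have h3 := hcl_scale 2 (by norm_num) _ h2
    have h4 : (2 : ℝ) • ((1/2 : ℝ) • x + (1/2 : ℝ) • y) = x + y := by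
      module
    rwa [h4] at h3
  have hsum_nonneg_cl : ∀ x ∈ closure Γ, 0 ≤ ∑ i, x i := by
    intro x hx
    have hcl : IsClosed {y : Fin n → ℝ | 0 ≤ ∑ i, y i} :=
      isClosed_le continuous_const (continuous_finset_sum _ fun j _ => continuous_apply j)
    have hsub : Γ ⊆ {y : Fin n → ℝ | 0 ≤ ∑ i, y i} := by
      intro y hy
      have := hup hy 1 le_rfl le_rfl
      rw [esymm_one_eq] at this
      exact this.le
    exact closure_minimal hsub hcl hx
  -- KEY LEMMA
  have key : ∀ x ∈ closure Γ, (∑ i, x i) = 0 → x = 0 := by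
    intro x hx hsum
    by_contra hx0
    apply hne
    -- find a positive coordinate
    have hipos : ∃ i, 0 < x i := by
      by_contra h
      push_neg at h
      apply hx0
      funext i
      exact (Finset.sum_eq_zero_iff_of_nonpos (fun i _ => h i)).mp hsum i (mem_univ i)
    obtain ⟨i0, hi0⟩ := hipos
    obtain ⟨m, rfl⟩ : ∃ m, n = m + 2 := ⟨n - 2, by omega⟩
    set x' : Fin (m + 2) → ℝ := x ∘ Equiv.swap 0 i0 with hx'def
    have hx'cl : x' ∈ closure Γ := hcl_perm _ _ hx
    have hx'0 : 0 < x' 0 := by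
      simpa [hx'def, Equiv.swap_apply_left] using hi0
    have hx'sum : ∑ i, x' i = 0 := by
      rw [hx'def, ← hsum]
      exact Equiv.sum_comp (Equiv.swap 0 i0) x
    -- the averaging permutations
    set σp : ℕ → Equiv.Perm (Fin (m + 2)) :=
      fun p => Equiv.Perm.decomposeFin.symm (0, (finRotate (m + 1)) ^ p) with hσp
    have hσp0 : ∀ p, σp p 0 = 0 := fun p =>
      Equiv.Perm.decomposeFin_symm_apply_zero 0 _
    have hσps : ∀ p (i : Fin (m + 1)), σp p i.succ = (i + (p : Fin (m + 1))).succ := by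
      intro p i
      rw [hσp]
      rw [Equiv.Perm.decomposeFin_symm_apply_succ, Equiv.swap_self, finRotate_pow]
      rfl
    set z : Fin (m + 2) → ℝ := ((m : ℝ) + 1)⁻¹ • ∑ p ∈ range (m + 1), x' ∘ σp p with hz
    have hm1 : ((m : ℝ) + 1) ≠ 0 := by positivity
    have hzcl : z ∈ closure Γ := by
      apply hcl_scale _ (by positivity)
      exact Finset.sum_induction _ (· ∈ closure Γ) (fun a b ha hb => hcladd a ha b hb)
        h0cl (fun p _ => hcl_perm _ _ hx'cl)
    have hz0 : z 0 = x' 0 := by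
      rw [hz]
      rw [Pi.smul_apply, Finset.sum_apply]
      rw [Finset.sum_congr rfl fun p _ => by
        show x' (σp p 0) = x' 0
        rw [hσp0]]
      rw [Finset.sum_const, card_range, nsmul_eq_mul, smul_eq_mul]
      push_cast
      field_simp
    have hzs : ∀ i : Fin (m + 1), z i.succ = -(x' 0) / ((m : ℝ) + 1) := by
      intro i
      have hsum1 : ∑ p ∈ range (m + 1), x' (σp p i.succ)
          = ∑ k : Fin (m + 1), x' ((i + k).succ) := by
        rw [← Fin.sum_univ_eq_sum_range (fun p => x' (σp p i.succ)) (m + 1)]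
        apply Finset.sum_congr rfl
        intro k _
        rw [hσps, Fin.cast_val_eq_self]
      have hsum2 : ∑ k : Fin (m + 1), x' ((i + k).succ)
          = ∑ k : Fin (m + 1), x' k.succ := by
        exact Fintype.sum_equiv (Equiv.addLeft i) _ _ (fun k => rfl)
      have hsum3 : ∑ k : Fin (m + 1), x' k.succ = -(x' 0) := by
        have := Fin.sum_univ_succ x'
        rw [hx'sum] at this
        linarith
      rw [hz, Pi.smul_apply, Finset.sum_apply, smul_eq_mul]
      rw [show (∑ p ∈ range (m + 1), (x' ∘ σp p) i.succ)
          = ∑ p ∈ range (m + 1), x' (σp p i.succ) from rfl, hsum1, hsum2, hsum3]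
      field_simp
    -- the basic vectors
    set u : Fin (m + 2) → ℝ := (x' 0)⁻¹ • z with hu
    have hucl : u ∈ closure Γ := hcl_scale _ (inv_pos.mpr hx'0) _ hzcl
    have hu_val : ∀ j, u j = if j = 0 then 1 else -(1 / ((m : ℝ) + 1)) := by
      intro j
      by_cases hj : j = 0
      · subst hj
        rw [hu, Pi.smul_apply, hz0, smul_eq_mul, if_pos rfl, inv_mul_cancel₀ hx'0.ne']
      · obtain ⟨i, rfl⟩ := Fin.eq_succ_of_ne_zero hj
        rw [hu, Pi.smul_apply, hzs, smul_eq_mul, if_neg hj]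
        field_simp
    have hui : ∀ i : Fin (m + 2), ∃ v ∈ closure Γ,
        ∀ j, v j = if j = i then 1 else -(1 / ((m : ℝ) + 1)) := by
      intro i
      refine ⟨u ∘ Equiv.swap 0 i, hcl_perm _ _ hucl, ?_⟩
      intro j
      rcases eq_or_ne j i with rfl | hji
      · simp only [Function.comp_apply, Equiv.swap_apply_right, hu_val, if_pos rfl]
      · rw [if_neg hji]
        rcases eq_or_ne j 0 with rfl | hj0
        · have hi0' : i ≠ 0 := fun h => hji h.symm
          simp only [Function.comp_apply, Equiv.swap_apply_left, hu_val, if_neg hi0']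
        · simp only [Function.comp_apply, Equiv.swap_apply_of_ne_of_ne hj0 hji,
            hu_val, if_neg hj0]
    choose v hvcl hvval using hui
    -- every sum-zero vector is in the closure
    have hH : ∀ y : Fin (m + 2) → ℝ, (∑ i, y i) = 0 → y ∈ closure Γ := by
      intro y hy
      set M : ℝ := ∑ i, |y i| with hM
      have hMnn : 0 ≤ M := Finset.sum_nonneg fun i _ => abs_nonneg _
      set c : Fin (m + 2) → ℝ := fun i => (((m : ℝ) + 1) / ((m : ℝ) + 2)) * (y i + M)
        with hc
      have hcnn : ∀ i, 0 ≤ c i := by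
        intro i
        apply mul_nonneg (by positivity)
        have h1 : |y i| ≤ M := Finset.single_le_sum (fun j _ => abs_nonneg (y j))
          (mem_univ i)
        have := neg_abs_le (y i)
        linarith
      have hS : ∑ i, c i = ((m : ℝ) + 1) * M := by
        rw [hc, ← Finset.mul_sum, Finset.sum_add_distrib, hy, Finset.sum_const,
          Finset.card_univ, Fintype.card_fin, nsmul_eq_mul]
        push_cast
        field_simp
        ring
      have hyrep : y = ∑ i, c i • v i := by
        funext j
        rw [Finset.sum_apply]
        have hterm : ∀ i, (c i • v i) j
            = (-(1 / ((m : ℝ) + 1))) * c i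
              + (if i = j then c i * (((m : ℝ) + 2) / ((m : ℝ) + 1)) else 0) := by
          intro i
          rw [Pi.smul_apply, hvval i j, smul_eq_mul]
          rcases eq_or_ne i j with rfl | hij
          · rw [if_pos rfl, if_pos rfl]
            field_simp
            ring
          · rw [if_neg (fun h => hij h.symm), if_neg hij]
            ring
        rw [Finset.sum_congr rfl fun i _ => hterm i, Finset.sum_add_distrib,
          Finset.sum_ite_eq' univ j, if_pos (mem_univ j), ← Finset.mul_sum, hS, hc]
        field_simp
        ring
      rw [hyrep]
      exact Finset.sum_induction _ (· ∈ closure Γ) (fun a b ha hb => hcladd a ha b hb)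
        h0cl (fun i _ => hcl_scale0 _ (hcnn i) _ (hvcl i))
    -- conclude Γ = GammaK n 1
    apply Set.Subset.antisymm hup
    intro y hy
    have hy1 : 0 < ∑ i, y i := by
      have := hy 1 le_rfl le_rfl
      rwa [esymm_one_eq] at this
    set s : ℝ := (∑ i, y i) / ((m : ℝ) + 2) with hs
    have hdiff : y - s • ee ∈ closure Γ := by
      apply hH
      have hptw : ∀ i, (y - s • ee) i = y i - s := by
        intro i; simp [hee_def]
      rw [Finset.sum_congr rfl fun i _ => hptw i, Finset.sum_sub_distrib,
        Finset.sum_const, Finset.card_univ, Fintype.card_fin, hs, nsmul_eq_mul]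
      push_cast
      field_simp
      ring
    have hse : s • ee ∈ Γ := hcone s (by rw [hs]; positivity) _ hee_mem
    have := hadd _ hdiff _ hse
    simpa using this
  -- MAIN ARGUMENT
  have hTcont : Continuous (lamT n t) := by
    apply continuous_pi
    intro i
    exact (continuous_const.mul (continuous_apply i)).add
      (continuous_const.mul (continuous_finset_sum _ fun j _ => continuous_apply j))
  set S : Set (Fin n → ℝ) := {x | lamT n t x ∈ Γ} with hS
  have hSopen : IsOpen S := hopen.preimage hTcont
  have hT0 : lamT n t 0 = 0 := by
    funext i
    simp [lamT]
  ext x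
  simp only [Set.mem_inter_iff, Set.mem_singleton_iff]
  constructor
  · rintro ⟨hxf, hxcl⟩
    by_contra hx0
    have hTx_notΓ : lamT n t x ∉ Γ := by
      intro h
      have : x ∈ interior S := by rwa [hSopen.interior_eq]
      exact hxf.2 this
    have hTx_cl : lamT n t x ∈ closure Γ :=
      map_mem_closure hTcont hxf.1 (fun y hy => hy)
    have hsx : 0 < ∑ i, x i := by
      rcases (hsum_nonneg_cl x hxcl).eq_or_lt with h | h
      · exact absurd (key x hxcl h.symm) hx0
      · exact h
    have hdecomp : lamT n t x = t • x + ((1 - t) * ∑ i, x i) • ee := by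
      funext i
      simp [lamT, hee_def]
    have h1 : t • x ∈ closure Γ := hcl_scale0 t ht0 x hxcl
    have h2 : ((1 - t) * ∑ i, x i) • ee ∈ Γ :=
      hcone _ (mul_pos (by linarith) hsx) _ hee_mem
    exact hTx_notΓ (hdecomp ▸ hadd _ h1 _ h2)
  · rintro rfl
    refine ⟨?_, h0cl⟩
    rw [hSopen.frontier_eq]
    constructor
    · -- 0 ∈ closure S
      have hmem : ∀ k : ℕ, (1 / ((k : ℝ) + 1)) • ee ∈ S := by
        intro k
        show lamT n t ((1 / ((k : ℝ) + 1)) • ee) ∈ Γ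
        have heq : lamT n t ((1 / ((k : ℝ) + 1)) • ee)
            = ((1 / ((k : ℝ) + 1)) * (t + (1 - t) * n)) • ee := by
          funext i
          simp [lamT, hee_def, Finset.card_univ, mul_comm]
          ring
        rw [heq]
        apply hcone _ _ _ hee_mem
        have hn3 : (3 : ℝ) ≤ (n : ℝ) := by exact_mod_cast hn
        have : 0 < t + (1 - t) * n := by nlinarith
        positivity
      have htend : Filter.Tendsto (fun k : ℕ => (1 / ((k : ℝ) + 1)) • ee)
          Filter.atTop (nhds (0 : Fin n → ℝ)) := by
        have := (tendsto_one_div_add_atTop_nhds_zero_nat (𝕜 := ℝ)).smul_const ee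
        rwa [zero_smul] at this
      exact mem_closure_of_tendsto htend (Filter.Eventually.of_forall hmem)
    · show lamT n t 0 ∉ Γ
      rw [hT0]
      exact h0notΓ
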